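/- Let R be a Noetherian local ring with maximal ideal m, r ∈ R, and let R̃ = R[t]_{(m, t−r)}, R* = R[t]_{m[t]}. If a ⊆ m R̃ is an ideal such that the specialization a(r) = a·R̃/(t−r) ⊆ R has finite colength in R, then a R* has finite colength in R*. -/

import Mathlib

open Polynomial IsLocalRing



lemma isArtinian_of_tower_of_surjective (R : Type*) {S M : Type*} [CommRing R] [Ring S]
    [AddCommGroup M] [Algebra R S] [Module S M] [Module R M] [IsScalarTower R S M]
    (hsurj : Function.Surjective (algebraMap R S)) (h : IsArtinian S M) : IsArtinian R M := by
  rw [isArtinian_iff] at h ⊢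
  have key : ∀ p : Submodule R M, ∃ q : Submodule S M, (q : Set M) = (p : Set M) := by
    intro p
    refine ⟨{ carrier := p, add_mem' := fun ha hb => p.add_mem ha hb,
              zero_mem' := p.zero_mem, smul_mem' := ?_ }, rfl⟩
    intro c x hx
    obtain ⟨r, rfl⟩ := hsurj c
    rw [algebraMap_smul]
    exact p.smul_mem r hx
  choose g hg using key
  have hle : ∀ a b : Submodule R M, a ≤ b ↔ g a ≤ g b := by
    intro a b
    rw [SetLike.le_def, SetLike.le_def]
    constructor
    · intro hab x hx
      have hx' : x ∈ (g a : Set M) := hx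
      rw [hg a] at hx'
      have : x ∈ (b : Set M) := hab hx'
      rw [← hg b] at this
      exact this
    · intro hab x hx
      have hx' : x ∈ (g a : Set M) := by rw [hg a]; exact hx
      have h2 : x ∈ (g b : Set M) := hab hx'
      rw [hg b] at h2
      exact h2
  refine Subrelation.wf (r := InvImage (· < ·) g) ?_ (InvImage.wf g h)
  intro p q hpq
  rw [lt_iff_le_not_ge] at hpq
  show g p < g q
  rw [lt_iff_le_not_ge]
  exact ⟨(hle p q).mp hpq.1, fun hc => hpq.2 ((hle q p).mpr hc)⟩

lemma isArtinian_of_pow_smul_top_eq_bot {S : Type*} [CommRing S] [IsNoetherianRing S]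
    [IsLocalRing S] : ∀ (n : ℕ) (M : Type _) [AddCommGroup M] [Module S M] [Module.Finite S M],
    (maximalIdeal S) ^ n • (⊤ : Submodule S M) = ⊥ → IsArtinian S M := by
  intro n
  induction n with
  | zero =>
    intro M _ _ _ h
    rw [pow_zero, Ideal.one_eq_top, Submodule.top_smul] at h
    have : Subsingleton M := by
      refine subsingleton_of_forall_eq 0 fun m => ?_
      have : m ∈ (⊥ : Submodule S M) := h ▸ Submodule.mem_top
      simpa using this
    exact isArtinian_of_finite
  | succ n ih =>
    intro M _ _ _ h
    set N : Submodule S M := (maximalIdeal S) • ⊤ with hN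
    have hNfg : N.FG := IsNoetherian.noetherian N
    have : Module.Finite S N := Module.Finite.iff_fg.mpr hNfg
    have hNart : IsArtinian S N := by
      refine ih N ?_
      have hinj := Submodule.map_injective_of_injective (N.injective_subtype)
      apply hinj
      rw [Submodule.map_smul'', Submodule.map_top, Submodule.range_subtype, Submodule.map_bot,
        hN, ← Submodule.smul_assoc, Ideal.smul_eq_mul, ← pow_succ]
      exact h
    have hQart : IsArtinian S (M ⧸ N) := by
      letI := Ideal.Quotient.field (maximalIdeal S)
      have h1 : Module.Finite (S ⧸ maximalIdeal S) (M ⧸ N) :=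
        Module.Finite.of_restrictScalars_finite S _ _
      have h2 : IsArtinian (S ⧸ maximalIdeal S) (M ⧸ N) := inferInstance
      haveI : IsScalarTower S (S ⧸ maximalIdeal S) (M ⧸ N) :=
        Module.IsTorsionBySet.isScalarTower _
      refine isArtinian_of_tower_of_surjective S ?_ h2
      rw [Ideal.Quotient.algebraMap_eq]
      exact Ideal.Quotient.mk_surjective
    exact (isArtinian_iff_submodule_quotient N).mpr ⟨hNart, hQart⟩

/-- In a Noetherian local ring, an ideal containing a power of the maximal ideal has
finite colength. -/
lemma isFiniteLength_quotient_of_pow_le {S : Type*} [CommRing S] [IsNoetherianRing S]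
    [IsLocalRing S] {I : Ideal S} {n : ℕ} (h : (maximalIdeal S) ^ n ≤ I) :
    IsFiniteLength S (S ⧸ I) := by
  rw [isFiniteLength_iff_isNoetherian_isArtinian]
  refine ⟨inferInstance, isArtinian_of_pow_smul_top_eq_bot n _ ?_⟩
  rw [eq_bot_iff]
  rw [Submodule.smul_le]
  rintro r hr m -
  obtain ⟨y, rfl⟩ := Ideal.Quotient.mk_surjective (I := I) m
  have : r • ((Ideal.Quotient.mk I) y) = Ideal.Quotient.mk I (r * y) := rfl
  rw [this, Submodule.mem_bot, Ideal.Quotient.eq_zero_iff_mem]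
  exact I.mul_mem_right y (h hr)

/-- Conversely, finite colength gives a power of the maximal ideal inside the ideal. -/
lemma exists_pow_le_of_isFiniteLength_quotient {S : Type*} [CommRing S] [IsNoetherianRing S]
    [IsLocalRing S] {I : Ideal S} (h : IsFiniteLength S (S ⧸ I)) :
    ∃ n, (maximalIdeal S) ^ n ≤ I := by
  obtain ⟨-, hart⟩ := isFiniteLength_iff_isNoetherian_isArtinian.mp h
  set f : ℕ →o (Submodule S (S ⧸ I))ᵒᵈ :=
    ⟨fun k => OrderDual.toDual ((maximalIdeal S) ^ k • ⊤), fun a b hab =>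
      Submodule.smul_mono_left (Ideal.pow_le_pow_right hab)⟩ with hf
  obtain ⟨k, hk⟩ := IsArtinian.monotone_stabilizes f
  refine ⟨k, ?_⟩
  have hstab' := hk (k+1) (Nat.le_succ k)
  simp only [hf, OrderHom.coe_mk] at hstab'
  have hstab : ((maximalIdeal S) ^ k • ⊤ : Submodule S (S ⧸ I)) =
      (maximalIdeal S) ^ (k+1) • ⊤ := OrderDual.toDual.injective hstab'
  have hbot : ((maximalIdeal S) ^ k • ⊤ : Submodule S (S ⧸ I)) = ⊥ := by
    refine Submodule.eq_bot_of_le_smul_of_le_jacobson_bot (maximalIdeal S) _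
      (IsNoetherian.noetherian _) ?_ ?_
    · rw [← Submodule.smul_assoc, Ideal.smul_eq_mul, ← pow_succ']
      exact le_of_eq hstab
    · rw [jacobson_eq_maximalIdeal ⊥ bot_ne_top]
  intro x hx
  have h1 : x • (Ideal.Quotient.mk I 1) ∈ ((maximalIdeal S) ^ k • ⊤ : Submodule S (S ⧸ I)) :=
    Submodule.smul_mem_smul hx Submodule.mem_top
  rw [hbot, Submodule.mem_bot] at h1
  have h2 : (x • (Ideal.Quotient.mk I 1) : S ⧸ I) = Ideal.Quotient.mk I x := by
    have : (x • (Ideal.Quotient.mk I 1) : S ⧸ I) = Ideal.Quotient.mk I (x * 1) := rfl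
    rw [this, mul_one]
  rw [h2] at h1
  rwa [← Ideal.Quotient.eq_zero_iff_mem]

/-- Krull's principal ideal theorem, special case: in a Noetherian local domain whose maximal
ideal has a power inside a principal ideal `(x)` with `x` a nonunit, every prime not
containing `x` is zero. -/
lemma prime_eq_bot_of_pow_le_span {D : Type*} [CommRing D] [IsNoetherianRing D] [IsLocalRing D]
    [IsDomain D] {x : D} (hx : x ∈ maximalIdeal D) {n : ℕ}
    (hxn : (maximalIdeal D) ^ n ≤ Ideal.span {x}) (p : Ideal D) [hp : p.IsPrime] (hxp : x ∉ p) :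
    p = ⊥ := by
  classical
  set A := Localization.AtPrime p
  set J : ℕ → Ideal D := fun k => (Ideal.map (algebraMap D A) (p ^ k)).comap (algebraMap D A)
    with hJ
  have hJanti : ∀ {a b : ℕ}, a ≤ b → J b ≤ J a := by
    intro a b hab
    exact Ideal.comap_mono (Ideal.map_mono (Ideal.pow_le_pow_right hab))
  have hple : ∀ k, p ^ k ≤ J k := fun k => Ideal.le_comap_map
  have hprim : ∀ k (d : D), d * x ∈ J k → d ∈ J k := by
    intro k d hd
    have hu : IsUnit (algebraMap D A x) := IsLocalization.map_units A (⟨x, hxp⟩ : p.primeCompl)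
    obtain ⟨u, hu⟩ := hu
    have : algebraMap D A d = (algebraMap D A (d * x)) * ↑u⁻¹ := by
      rw [map_mul, ← hu, mul_assoc, u.mul_inv, mul_one]
    simp only [J, Ideal.mem_comap] at hd ⊢
    rw [this]
    exact Ideal.mul_mem_right _ _ hd
  -- the quotient D ⧸ (x) is an Artinian D-module
  set N : Submodule D D := Ideal.span {x} with hNdef
  have hart : IsArtinian D (D ⧸ N) := by
    apply isArtinian_of_pow_smul_top_eq_bot n
    rw [eq_bot_iff, Submodule.smul_le]
    rintro r hr m -
    obtain ⟨y, rfl⟩ := N.mkQ_surjective m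
    rw [← map_smul, Submodule.mem_bot, Submodule.mkQ_apply, Submodule.Quotient.mk_eq_zero,
      smul_eq_mul]
    exact hxn (Ideal.mul_mem_right y _ hr)
  -- the chain of images of J k in D ⧸ (x) stabilizes
  set f : ℕ →o (Submodule D (D ⧸ N))ᵒᵈ :=
    ⟨fun k => OrderDual.toDual (Submodule.map N.mkQ (J k)), fun a b hab =>
      Submodule.map_mono (hJanti hab)⟩ with hf
  obtain ⟨k₀, hk₀⟩ := IsArtinian.monotone_stabilizes f
  -- hence J stabilizes, by Nakayama
  have hstep : ∀ m, k₀ ≤ m → J m = J (m + 1) := by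
    intro m hm
    refine le_antisymm ?_ (hJanti (Nat.le_succ m))
    have hmap : Submodule.map N.mkQ (J m) = Submodule.map N.mkQ (J (m + 1)) := by
      have h1 := (hk₀ m hm).symm.trans (hk₀ (m + 1) (hm.trans (Nat.le_succ m)))
      simpa only [hf, OrderHom.coe_mk] using OrderDual.toDual.injective h1
    have hsup : (J m) ⊔ N = (J (m + 1)) ⊔ N := by
      have := congrArg (Submodule.comap N.mkQ) hmap
      rwa [Submodule.comap_map_mkQ, Submodule.comap_map_mkQ, sup_comm N, sup_comm N] at this
    -- Nakayama
    refine Submodule.le_of_le_smul_of_le_jacobson_bot (I := Ideal.span {x}) (IsNoetherian.noetherian _) ?_ ?_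
    · rw [jacobson_eq_maximalIdeal ⊥ bot_ne_top]
      rw [Ideal.span_le, Set.singleton_subset_iff]
      exact hx
    · -- J m ≤ J (m+1) ⊔ span {x} • J m
      intro y hy
      have hy' : y ∈ (J (m + 1)) ⊔ N := by rw [← hsup]; exact Submodule.mem_sup_left hy
      obtain ⟨a, ha, b, hb, rfl⟩ := Submodule.mem_sup.mp hy'
      obtain ⟨c, rfl⟩ := Ideal.mem_span_singleton'.mp hb
      have hcx : c * x ∈ J m := by
        have : c * x = a + c * x - a := by ring
        rw [this]
        exact Submodule.sub_mem _ hy (hJanti (Nat.le_succ m) ha)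
      have hc : c ∈ J m := hprim m c hcx
      refine Submodule.add_mem_sup ha ?_
      rw [show c * x = x • c from by rw [smul_eq_mul]; ring]
      exact Submodule.smul_mem_smul (Ideal.mem_span_singleton_self x) hc
  have hJconst : ∀ m, k₀ ≤ m → J k₀ = J m := by
    intro m hm
    induction m with
    | zero =>
      have : k₀ = 0 := Nat.le_zero.mp hm
      rw [this]
    | succ m ih =>
      rcases Nat.lt_or_ge k₀ (m + 1) with hlt | hge
      · have hm' : k₀ ≤ m := Nat.lt_succ_iff.mp hlt
        exact (ih hm').trans (hstep m hm')
      · have : k₀ = m + 1 := le_antisymm hm hge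
        rw [this]
  -- conclude p ^ (k₀+1) = 0 via Krull intersection in A
  have hAnoeth : IsNoetherianRing A := IsLocalization.isNoetherianRing p.primeCompl A inferInstance
  have hAmax : Ideal.map (algebraMap D A) p = maximalIdeal A :=
    (Localization.AtPrime.map_eq_maximalIdeal)
  have hmapJ : ∀ m, Ideal.map (algebraMap D A) (J m) = (Ideal.map (algebraMap D A) p) ^ m := by
    intro m
    rw [hJ]
    rw [IsLocalization.map_comap p.primeCompl A, Ideal.map_pow]
  have hbot : Ideal.map (algebraMap D A) (p ^ (k₀+1)) = ⊥ := by
    have hle : ∀ i, Ideal.map (algebraMap D A) (p ^ (k₀+1)) ≤ (maximalIdeal A) ^ i := by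
      intro i
      rcases Nat.le_total i k₀ with hik | hki
      · calc Ideal.map (algebraMap D A) (p ^ (k₀+1)) = (Ideal.map (algebraMap D A) p) ^ (k₀+1) :=
              Ideal.map_pow _ _ _
          _ ≤ (Ideal.map (algebraMap D A) p) ^ i := Ideal.pow_le_pow_right (hik.trans (Nat.le_succ k₀))
          _ = (maximalIdeal A) ^ i := by rw [hAmax]
      ·
        calc Ideal.map (algebraMap D A) (p ^ (k₀+1)) ≤ Ideal.map (algebraMap D A) (J (k₀+1)) :=
              Ideal.map_mono (hple _)
          _ = Ideal.map (algebraMap D A) (J k₀) := by rw [← hJconst (k₀+1) (Nat.le_succ k₀)]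
          _ = Ideal.map (algebraMap D A) (J i) := by rw [hJconst i hki]
          _ = (Ideal.map (algebraMap D A) p) ^ i := hmapJ i
          _ = (maximalIdeal A) ^ i := by rw [hAmax]
    have : Ideal.map (algebraMap D A) (p ^ (k₀+1)) ≤ ⨅ i : ℕ, (maximalIdeal A) ^ i :=
      le_iInf hle
    rwa [Ideal.iInf_pow_eq_bot_of_isLocalRing (maximalIdeal A)
      (Ideal.IsPrime.ne_top inferInstance), le_bot_iff] at this
  have hinj : Function.Injective (algebraMap D A) :=
    IsLocalization.injective A p.primeCompl_le_nonZeroDivisors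
  have hpow : p ^ (k₀+1) ≤ ⊥ := by
    intro z hz
    have : algebraMap D A z ∈ Ideal.map (algebraMap D A) (p ^ (k₀+1)) :=
      Ideal.mem_map_of_mem _ hz
    rw [hbot, Ideal.mem_bot] at this
    rw [Ideal.mem_bot]
    exact hinj (by rw [this, map_zero])
  have : p ≤ ⊥ := by
    intro z hz
    have : z ^ (k₀+1) ∈ (⊥ : Ideal D) := hpow (Ideal.pow_mem_pow hz _)
    rw [Ideal.mem_bot] at this ⊢
    exact pow_eq_zero_iff (Nat.succ_ne_zero k₀) |>.mp this
  exact le_bot_iff.mp this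

/-- Let `R` be a Noetherian local ring with maximal ideal `m`, `r ∈ R`,
`R̃ = R[t]_{(m, t−r)}` and `R* = R[t]_{m[t]}`. If `a ⊆ m R̃` is an ideal (extended from an
ideal `a₀ ⊆ m[t]` of `R[t]`) whose specialization `a(r) = a R̃/(t−r)` has finite colength
in `R`, then `a R*` has finite colength in `R*`. -/
theorem finite_colength_of_specialization {R : Type*} [CommRing R] [IsNoetherianRing R]
    [IsLocalRing R] (r : R)
    [hm : (Ideal.map (Polynomial.C : R →+* R[X]) (maximalIdeal R)).IsPrime]
    [ht : (Ideal.map (Polynomial.C : R →+* R[X]) (maximalIdeal R) ⊔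
        Ideal.span {(X : R[X]) - Polynomial.C r}).IsPrime]
    (Rstar : Type*) [CommRing Rstar] [Algebra R[X] Rstar]
    [IsLocalization.AtPrime Rstar (Ideal.map (Polynomial.C : R →+* R[X]) (maximalIdeal R))]
    (Rtilde : Type*) [CommRing Rtilde] [Algebra R[X] Rtilde]
    [IsLocalization.AtPrime Rtilde (Ideal.map (Polynomial.C : R →+* R[X]) (maximalIdeal R) ⊔
        Ideal.span {(X : R[X]) - Polynomial.C r})]
    (a₀ : Ideal R[X])
    (ha : a₀ ≤ Ideal.map (Polynomial.C : R →+* R[X]) (maximalIdeal R))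
    (hfin : IsFiniteLength Rtilde
      (Rtilde ⧸ (Ideal.map (algebraMap R[X] Rtilde) a₀ ⊔
        Ideal.span {algebraMap R[X] Rtilde ((X : R[X]) - Polynomial.C r)}))) :
    IsFiniteLength Rstar (Rstar ⧸ Ideal.map (algebraMap R[X] Rstar) a₀) := by
  classical
  set pstar : Ideal R[X] := Ideal.map (Polynomial.C : R →+* R[X]) (maximalIdeal R) with hpstar
  set q : Ideal R[X] := pstar ⊔ Ideal.span {(X : R[X]) - Polynomial.C r} with hq
  haveI hLt : IsLocalRing Rtilde := IsLocalization.AtPrime.isLocalRing Rtilde q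
  haveI hLs : IsLocalRing Rstar := IsLocalization.AtPrime.isLocalRing Rstar pstar
  haveI hNt : IsNoetherianRing Rtilde :=
    IsLocalization.isNoetherianRing q.primeCompl Rtilde inferInstance
  haveI hNs : IsNoetherianRing Rstar :=
    IsLocalization.isNoetherianRing pstar.primeCompl Rstar inferInstance
  have hcq : Ideal.comap (algebraMap R[X] Rtilde) (maximalIdeal Rtilde) = q :=
    IsLocalization.AtPrime.comap_maximalIdeal Rtilde q
  have hmq : Ideal.map (algebraMap R[X] Rtilde) q = maximalIdeal Rtilde := by
    conv_rhs => rw [← IsLocalization.map_comap q.primeCompl Rtilde (maximalIdeal Rtilde)]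
    exact congrArg (Ideal.map (algebraMap R[X] Rtilde)) hcq.symm
  have hcs : Ideal.comap (algebraMap R[X] Rstar) (maximalIdeal Rstar) = pstar :=
    IsLocalization.AtPrime.comap_maximalIdeal Rstar pstar
  have hms : Ideal.map (algebraMap R[X] Rstar) pstar = maximalIdeal Rstar := by
    conv_rhs => rw [← IsLocalization.map_comap pstar.primeCompl Rstar (maximalIdeal Rstar)]
    exact congrArg (Ideal.map (algebraMap R[X] Rstar)) hcs.symm
  -- X - C r is not in pstar
  have hXr : (X : R[X]) - Polynomial.C r ∉ pstar := by
    intro hmem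
    have h1 := Ideal.mem_map_C_iff.mp hmem 1
    simp only [Polynomial.coeff_sub, Polynomial.coeff_X_one, Polynomial.coeff_C,
      if_neg (one_ne_zero)] at h1
    rw [sub_zero] at h1
    exact (Ideal.IsMaximal.ne_top (maximalIdeal.isMaximal R))
      (Ideal.eq_top_of_isUnit_mem _ h1 isUnit_one)
  -- from hfin: a power of the maximal ideal of Rtilde is inside the specialized ideal
  obtain ⟨n, hn⟩ := exists_pow_le_of_isFiniteLength_quotient hfin
  -- key claim: every prime of Rstar over (a₀ Rstar) is the maximal ideal
  have key : ∀ P : Ideal Rstar, P.IsPrime → Ideal.map (algebraMap R[X] Rstar) a₀ ≤ P →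
      P = maximalIdeal Rstar := by
    intro P hP hle
    set p : Ideal R[X] := Ideal.comap (algebraMap R[X] Rstar) P with hp
    haveI hpprime : p.IsPrime := Ideal.IsPrime.comap _
    have ha₀p : a₀ ≤ p := Ideal.map_le_iff_le_comap.mp hle
    have hppstar : p ≤ pstar := by
      rw [← hcs]
      exact Ideal.comap_mono (le_maximalIdeal hP.ne_top)
    have hpq : p ≤ q := hppstar.trans le_sup_left
    have hdisj : Disjoint (q.primeCompl : Set R[X]) (p : Set R[X]) :=
      Set.disjoint_left.mpr fun {a} haq hap => haq (hpq hap)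
    have hdisj' : Disjoint (q.primeCompl : Set R[X]) (pstar : Set R[X]) :=
      Set.disjoint_left.mpr fun {a} haq hap => haq (le_sup_left (a := pstar) hap)
    set Pt : Ideal Rtilde := Ideal.map (algebraMap R[X] Rtilde) p with hPt
    haveI hPtprime : Pt.IsPrime :=
      IsLocalization.isPrime_of_isPrime_disjoint q.primeCompl Rtilde p hpprime hdisj
    have hPtle : Pt ≤ maximalIdeal Rtilde := by
      rw [← hmq]; exact Ideal.map_mono hpq
    set Pst : Ideal Rtilde := Ideal.map (algebraMap R[X] Rtilde) pstar with hPst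
    haveI hPstprime : Pst.IsPrime :=
      IsLocalization.isPrime_of_isPrime_disjoint q.primeCompl Rtilde pstar hm hdisj'
    have hPtPst : Pt ≤ Pst := Ideal.map_mono hppstar
    -- the quotient domain
    haveI : Nontrivial (Rtilde ⧸ Pt) := Ideal.Quotient.nontrivial_iff.mpr hPtprime.ne_top
    haveI : IsLocalRing (Rtilde ⧸ Pt) :=
      IsLocalRing.of_surjective' (Ideal.Quotient.mk Pt) Ideal.Quotient.mk_surjective
    -- units lift along the quotient map
    have hmaxD : maximalIdeal (Rtilde ⧸ Pt) =
        Ideal.map (Ideal.Quotient.mk Pt) (maximalIdeal Rtilde) := by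
      refine le_antisymm ?_ ?_
      · intro d hd
        obtain ⟨a, rfl⟩ := Ideal.Quotient.mk_surjective d
        by_cases hamem : a ∈ maximalIdeal Rtilde
        · exact Ideal.mem_map_of_mem _ hamem
        · exfalso
          have : IsUnit a := by
            by_contra hnu
            exact hamem hnu
          exact (mem_maximalIdeal _).mp hd (this.map (Ideal.Quotient.mk Pt))
      · rw [Ideal.map_le_iff_le_comap]
        intro a hamem
        rw [Ideal.mem_comap, mem_maximalIdeal, mem_nonunits_iff]
        intro hu
        obtain ⟨c, hc⟩ := isUnit_iff_exists_inv.mp hu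
        obtain ⟨c', rfl⟩ := Ideal.Quotient.mk_surjective c
        rw [← map_mul, ← map_one (Ideal.Quotient.mk Pt), Ideal.Quotient.mk_eq_mk_iff_sub_mem] at hc
        have h1mem : (1 : Rtilde) ∈ maximalIdeal Rtilde := by
          have h3 := (maximalIdeal Rtilde).sub_mem (Ideal.mul_mem_right c' _ hamem) (hPtle hc)
          simpa using h3
        exact (Ideal.IsMaximal.ne_top (maximalIdeal.isMaximal Rtilde))
          (Ideal.eq_top_of_isUnit_mem _ h1mem isUnit_one)
    set x : Rtilde ⧸ Pt := Ideal.Quotient.mk Pt (algebraMap R[X] Rtilde ((X : R[X]) - C r))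
      with hxdef
    have hzmax : algebraMap R[X] Rtilde ((X : R[X]) - C r) ∈ maximalIdeal Rtilde := by
      rw [← hmq]
      exact Ideal.mem_map_of_mem _ (Ideal.mem_sup_right (Ideal.subset_span rfl))
    have hxmem : x ∈ maximalIdeal (Rtilde ⧸ Pt) := by
      rw [hmaxD]
      exact Ideal.mem_map_of_mem _ hzmax
    have hxn : (maximalIdeal (Rtilde ⧸ Pt)) ^ n ≤ Ideal.span {x} := by
      rw [hmaxD, ← Ideal.map_pow]
      have hstep : (maximalIdeal Rtilde) ^ n ≤ Pt ⊔ Ideal.span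
          {algebraMap R[X] Rtilde ((X : R[X]) - C r)} := by
        refine hn.trans (sup_le_sup_right ?_ _)
        exact Ideal.map_mono ha₀p
      calc Ideal.map (Ideal.Quotient.mk Pt) ((maximalIdeal Rtilde) ^ n)
          ≤ Ideal.map (Ideal.Quotient.mk Pt) (Pt ⊔ Ideal.span
            {algebraMap R[X] Rtilde ((X : R[X]) - C r)}) := Ideal.map_mono hstep
        _ = Ideal.span {x} := by
            rw [Ideal.map_sup, Ideal.map_quotient_self, bot_sup_eq, Ideal.map_span,
              Set.image_singleton]
    set pbar : Ideal (Rtilde ⧸ Pt) := Ideal.map (Ideal.Quotient.mk Pt) Pst with hpbar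
    haveI hpbarprime : pbar.IsPrime := by
      refine Ideal.map_isPrime_of_surjective Ideal.Quotient.mk_surjective ?_
      rw [Ideal.mk_ker]
      exact hPtPst
    have hxpbar : x ∉ pbar := by
      intro hxin
      have hcm := Ideal.comap_map_of_surjective (Ideal.Quotient.mk Pt)
        Ideal.Quotient.mk_surjective Pst
      rw [← RingHom.ker_eq_comap_bot, Ideal.mk_ker] at hcm
      have hzPst : algebraMap R[X] Rtilde ((X : R[X]) - C r) ∈ Pst := by
        have : algebraMap R[X] Rtilde ((X : R[X]) - C r) ∈
            Ideal.comap (Ideal.Quotient.mk Pt) pbar := hxin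
        rw [hpbar, hcm, sup_eq_left.mpr hPtPst] at this
        exact this
      have : (X : R[X]) - C r ∈ pstar := by
        have hcomap := IsLocalization.comap_map_of_isPrime_disjoint q.primeCompl Rtilde
          (I := pstar) hm hdisj'
        rw [← hcomap]
        exact hzPst
      exact hXr this
    have hbot : pbar = ⊥ := prime_eq_bot_of_pow_le_span hxmem hxn pbar hxpbar
    -- so Pst ≤ Pt, hence pstar ≤ p
    have hPstPt : Pst ≤ Pt := by
      intro z hz
      have : Ideal.Quotient.mk Pt z ∈ pbar := Ideal.mem_map_of_mem _ hz
      rw [hbot, Ideal.mem_bot] at this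
      exact (Ideal.Quotient.eq_zero_iff_mem).mp this
    have hpstarp : pstar ≤ p := by
      have h1 := IsLocalization.comap_map_of_isPrime_disjoint q.primeCompl Rtilde (I := pstar) hm hdisj'
      have h2 := IsLocalization.comap_map_of_isPrime_disjoint q.primeCompl Rtilde (I := p) hpprime hdisj
      rw [← h1, ← h2]
      exact Ideal.comap_mono hPstPt
    have hpeq : p = pstar := le_antisymm hppstar hpstarp
    rw [← IsLocalization.map_comap pstar.primeCompl Rstar P]
    rw [show Ideal.under R[X] P = p from rfl, hpeq, hms]
  -- conclude
  have hrad : maximalIdeal Rstar ≤ (Ideal.map (algebraMap R[X] Rstar) a₀).radical := by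
    rw [Ideal.radical_eq_sInf]
    refine le_sInf ?_
    rintro J ⟨hJle, hJprime⟩
    rw [key J hJprime hJle]
  obtain ⟨k, hk⟩ := Ideal.exists_pow_le_of_le_radical_of_fg hrad (IsNoetherian.noetherian _)
  exact isFiniteLength_quotient_of_pow_le hk
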